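/- For t in a neighborhood of 0 (|t| < 1/2), the function e^{x(1-\sqrt{1-2t})} equals its Taylor series \sum_{n=0}^{\infty} p_n(x) t^n/n!, where p_n(x) = \sum_{k=1}^{n} \frac{(2n-k-1)!}{2^{n-k}(k-1)!(n-k)!} x^k for n \ge 1 and p_0(x) = 1. -/

import Mathlib

open Finset Real

/-- The reverse Bessel polynomial `p n`. -/
noncomputable def pB (n : ℕ) (x : ℝ) : ℝ :=
  if n = 0 then 1 else
    ∑ k ∈ Finset.Icc 1 n,
      ((2 * n - k - 1).factorial : ℝ) / (2 ^ (n - k) * (k - 1).factorial * (n - k).factorial) * x ^ k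

open scoped Nat

/-- coefficient of `t^n` in `(1 - √(1-2t))^k` -/
noncomputable def dd (n k : ℕ) : ℝ :=
  if k = 0 then (if n = 0 then 1 else 0)
  else if n < k then 0
  else (k : ℝ) * (2 * n - k - 1)! / (2 ^ (n - k) * (n - k)! * n !)

lemma dd_nonneg (n k : ℕ) : 0 ≤ dd n k := by
  unfold dd
  split
  · split <;> norm_num
  · split
    · exact le_rfl
    · positivity

lemma catalan_mul_cast (m : ℕ) : (catalan m : ℝ) * (m ! * (m + 1)!) = (2 * m)! := by
  have h1 : (m + 1) * catalan m = m.centralBinom := succ_mul_catalan_eq_centralBinom m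
  have h2 : (2 * m).choose m * m ! * (2 * m - m)! = (2 * m)! :=
    Nat.choose_mul_factorial_mul_factorial (by omega)
  have h3 : 2 * m - m = m := by omega
  rw [h3] at h2
  have key : catalan m * (m ! * (m + 1)!) = (2 * m)! := by
    rw [Nat.factorial_succ]
    calc catalan m * (m ! * ((m + 1) * m !)) = ((m + 1) * catalan m) * m ! * m ! := by ring
      _ = (2 * m).choose m * m ! * m ! := by rw [h1, Nat.centralBinom]
      _ = (2 * m)! := by rw [mul_assoc, mul_comm (m !) (m !), ← mul_assoc] at h2 ⊢; exact h2
  exact_mod_cast congrArg (fun z : ℕ => (z : ℝ)) key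

lemma catalan_le_four_pow (m : ℕ) : catalan m ≤ 4 ^ m := by
  have h : ∀ n : ℕ, n.centralBinom ≤ 4 ^ n := by
    intro n
    induction n with
    | zero => simp [Nat.centralBinom_zero]
    | succ n ih =>
      have h1 := Nat.succ_mul_centralBinom_succ n
      have : (n + 1) * (n + 1).centralBinom ≤ (n + 1) * (4 * 4 ^ n) := by
        rw [h1]
        calc 2 * (2 * n + 1) * n.centralBinom ≤ (4 * (n + 1)) * n.centralBinom := by
              apply Nat.mul_le_mul_right; omega
          _ = (n + 1) * (4 * n.centralBinom) := by ring
          _ ≤ (n + 1) * (4 * 4 ^ n) := Nat.mul_le_mul_left _ (Nat.mul_le_mul_left _ ih)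
      have := Nat.le_of_mul_le_mul_left this (by omega)
      simpa [pow_succ, mul_comm] using this
  calc catalan m ≤ (m + 1) * catalan m := Nat.le_mul_of_pos_left _ (by omega)
    _ = m.centralBinom := succ_mul_catalan_eq_centralBinom m
    _ ≤ 4 ^ m := h m

lemma dd_one (m : ℕ) : dd (m + 1) 1 = (catalan m : ℝ) / 2 ^ m := by
  have h1 : 2 * (m + 1) - 1 - 1 = 2 * m := by omega
  have h2 : m + 1 - 1 = m := by omega
  rw [dd]
  simp only [Nat.one_ne_zero, if_false, Nat.lt_one_iff, Nat.succ_ne_zero, if_false, h1, h2]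
  have hc := catalan_mul_cast m
  have hm : (m ! : ℝ) ≠ 0 := Nat.cast_ne_zero.mpr m.factorial_ne_zero
  have hm1 : ((m + 1)! : ℝ) ≠ 0 := Nat.cast_ne_zero.mpr (m + 1).factorial_ne_zero
  field_simp
  rw [← hc]
  ring

noncomputable def aC (t : ℝ) (m : ℕ) : ℝ := (catalan m : ℝ) / 2 ^ m * t ^ (m + 1)

lemma aC_bound {r : ℝ} (hr : 0 ≤ r) (t : ℝ) (htr : |t| ≤ r) (m : ℕ) :
    ‖aC t m‖ ≤ r * (2 * r) ^ m := by
  have h4 : (catalan m : ℝ) ≤ 4 ^ m := by exact_mod_cast catalan_le_four_pow m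
  have habs : |aC t m| = (catalan m : ℝ) / 2 ^ m * |t| ^ (m + 1) := by
    rw [aC, abs_mul, abs_pow, abs_div, abs_pow]
    simp [abs_of_nonneg, Nat.cast_nonneg]
  rw [Real.norm_eq_abs, habs]
  calc (catalan m : ℝ) / 2 ^ m * |t| ^ (m + 1) ≤ 4 ^ m / 2 ^ m * r ^ (m + 1) := by
        apply mul_le_mul (by gcongr) (by gcongr <;> positivity) (by positivity) (by positivity)
    _ = r * (2 * r) ^ m := by
        rw [show (4:ℝ) = 2 * 2 by norm_num, mul_pow, pow_succ, mul_pow]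
        field_simp

lemma summable_aC {t : ℝ} (ht : |t| < 1 / 2) : Summable (aC t) := by
  apply Summable.of_norm_bounded (g := fun m => |t| * (2 * |t|) ^ m)
  · exact (summable_geometric_of_lt_one (by positivity) (by linarith)).mul_left _
  · exact aC_bound (abs_nonneg t) t le_rfl

noncomputable def sC (t : ℝ) : ℝ := ∑' m, aC t m

lemma sC_quadratic {t : ℝ} (ht : |t| < 1 / 2) : sC t ^ 2 = 2 * sC t - 2 * t := by
  have hs := summable_aC ht
  have hnorm : Summable fun m => ‖aC t m‖ := by
    apply Summable.of_nonneg_of_le (fun m => norm_nonneg _)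
      (aC_bound (abs_nonneg t) t le_rfl)
    exact (summable_geometric_of_lt_one (by positivity) (by linarith)).mul_left _
  have hmul : sC t * sC t =
      ∑' n, ∑ ij ∈ antidiagonal n, aC t ij.1 * aC t ij.2 :=
    tsum_mul_tsum_eq_tsum_sum_antidiagonal_of_summable_norm hnorm hnorm
  have hterm : ∀ n, (∑ ij ∈ antidiagonal n, aC t ij.1 * aC t ij.2)
      = (catalan (n + 1) : ℝ) / 2 ^ n * t ^ (n + 2) := by
    intro n
    have : ∀ ij ∈ antidiagonal n, aC t ij.1 * aC t ij.2
        = (catalan ij.1 : ℝ) * catalan ij.2 / 2 ^ n * t ^ (n + 2) := by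
      rintro ⟨i, j⟩ hij
      rw [Finset.HasAntidiagonal.mem_antidiagonal] at hij
      simp only [aC]
      simp only at hij ⊢
      subst hij
      rw [pow_add, pow_add, pow_add, pow_add]
      field_simp
      ring
    rw [Finset.sum_congr rfl this, ← Finset.sum_mul, ← Finset.sum_div]
    rw_mod_cast [← catalan_succ' n]
  have hsplit : sC t = t + ∑' n, aC t (n + 1) := by
    rw [sC, Summable.tsum_eq_zero_add hs]
    simp [aC]
  have h2 : ∑' n, (catalan (n + 1) : ℝ) / 2 ^ n * t ^ (n + 2)
      = 2 * ∑' n, aC t (n + 1) := by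
    rw [← tsum_mul_left]
    congr 1
    funext n
    rw [aC]
    rw [show (2:ℝ) ^ (n + 1) = 2 * 2 ^ n by ring]
    field_simp
  rw [funext hterm, h2] at hmul
  have hrest : 2 * ∑' n, aC t (n + 1) = 2 * sC t - 2 * t := by
    rw [hsplit]; ring
  rw [hrest] at hmul
  rw [sq]; exact hmul

lemma sC_zero : sC 0 = 0 := by
  rw [sC]
  convert tsum_zero with m
  simp [aC]

lemma sC_continuousOn {r : ℝ} (hr0 : 0 ≤ r) (hr : r < 1 / 2) :
    ContinuousOn sC (Set.Icc (-r) r) := by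
  apply continuousOn_tsum (u := fun m => r * (2 * r) ^ m)
  · intro m; exact (Continuous.continuousOn (by continuity))
  · apply Summable.mul_left
    apply summable_geometric_of_lt_one (by linarith) (by linarith)
  · intro m x hx
    exact aC_bound hr0 x (abs_le.mpr ⟨hx.1, hx.2⟩) m

lemma sC_ne_one {u : ℝ} (hu : |u| < 1 / 2) : sC u ≠ 1 := by
  intro h
  have := sC_quadratic hu
  rw [h] at this
  have : u = 1 / 2 := by linarith
  rw [this] at hu
  rw [abs_of_nonneg (by norm_num)] at hu
  exact lt_irrefl _ hu

lemma sC_lt_one {t : ℝ} (ht : |t| < 1 / 2) : sC t < 1 := by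
  by_contra hle
  push_neg at hle
  have hsub : Set.uIcc 0 t ⊆ Set.Icc (-|t|) |t| := by
    intro y hy
    rcases Set.mem_uIcc.mp hy with ⟨h1, h2⟩ | ⟨h1, h2⟩ <;>
      exact ⟨by cases abs_cases t <;> linarith, by cases abs_cases t <;> linarith⟩
  have hcont : ContinuousOn sC (Set.uIcc 0 t) :=
    ((sC_continuousOn (abs_nonneg t) ht).mono hsub)
  have h1 : (1 : ℝ) ∈ Set.uIcc (sC 0) (sC t) := by
    rw [sC_zero]
    exact Set.mem_uIcc.mpr (Or.inl ⟨zero_le_one, hle⟩)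
  obtain ⟨c, hc, hc1⟩ := intermediate_value_uIcc hcont h1
  have hcabs : |c| < 1 / 2 := by
    have := hsub hc
    exact lt_of_le_of_lt (abs_le.mpr ⟨this.1, this.2⟩) ht
  exact sC_ne_one hcabs hc1

lemma sC_sqrt {t : ℝ} (ht : |t| < 1 / 2) : sC t = 1 - Real.sqrt (1 - 2 * t) := by
  have hq := sC_quadratic ht
  have h1 : (1 - sC t) ^ 2 = 1 - 2 * t := by ring_nf; ring_nf at hq; linarith
  have h2 : 0 ≤ 1 - sC t := by linarith [sC_lt_one ht]
  rw [← h1, Real.sqrt_sq h2]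
  ring

lemma dd_diag (j : ℕ) : dd j j = 1 := by
  rcases Nat.eq_zero_or_pos j with h | h
  · subst h; simp [dd]
  · rw [dd, if_neg (by omega), if_neg (by omega)]
    rw [Nat.sub_self]
    have : 2 * j - j - 1 = j - 1 := by omega
    rw [this]
    have hj : (j : ℝ) * (j - 1)! = j ! := by
      rw [← Nat.mul_factorial_pred h.ne']; push_cast; ring
    rw [hj]
    simp [Nat.factorial_ne_zero, div_self, Nat.cast_ne_zero]

/-- key factorial identity -/
lemma dd_key (m p : ℕ) :
    ((m : ℝ) + 2) * (2 * p + m + 1)! / (2 ^ p * p ! * (m + p + 2)!) =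
      2 * ((m : ℝ) + 1) * (2 * p + m + 2)! / (2 ^ (p + 1) * (p + 1)! * (m + p + 2)!) -
      2 * (m : ℝ) * (2 * p + m + 1)! / (2 ^ (p + 1) * (p + 1)! * (m + p + 1)!) := by
  have f1 : ((2 * p + m + 2)! : ℝ) = (2 * p + m + 2) * (2 * p + m + 1)! := by
    rw [show 2 * p + m + 2 = (2 * p + m + 1) + 1 by omega, Nat.factorial_succ]; push_cast; ring
  have f2 : ((p + 1)! : ℝ) = (p + 1) * p ! := by rw [Nat.factorial_succ]; push_cast; ring
  have f3 : ((m + p + 2)! : ℝ) = (m + p + 2) * (m + p + 1)! := by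
    rw [show m + p + 2 = (m + p + 1) + 1 by omega, Nat.factorial_succ]; push_cast; ring
  have h1 : ((2 * p + m + 1)! : ℝ) ≠ 0 := Nat.cast_ne_zero.mpr (Nat.factorial_ne_zero _)
  have h2 : ((m + p + 1)! : ℝ) ≠ 0 := Nat.cast_ne_zero.mpr (Nat.factorial_ne_zero _)
  have h3 : (p ! : ℝ) ≠ 0 := Nat.cast_ne_zero.mpr (Nat.factorial_ne_zero _)
  have h4 : (2 : ℝ) ^ p ≠ 0 := by positivity
  rw [f1, f2, f3, pow_succ]
  field_simp
  ring

lemma dd_rec (m n : ℕ) :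
    dd n (m + 2) = 2 * dd n (m + 1) - 2 * (if n = 0 then 0 else dd (n - 1) m) := by
  rcases Nat.eq_zero_or_pos n with rfl | hn
  · simp [dd]
  rw [if_neg (by omega)]
  rcases lt_trichotomy n (m + 1) with h | h | h
  · -- all zero
    rw [dd, if_neg (by omega), if_pos (by omega)]
    rw [dd, if_neg (by omega), if_pos (by omega)]
    have : dd (n - 1) m = 0 := by
      rcases Nat.eq_zero_or_pos m with rfl | hm
      · rw [dd, if_pos rfl, if_neg (by omega)]
      · rw [dd, if_neg (by omega), if_pos (by omega)]
    rw [this]; ring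
  · -- n = m + 1
    subst h
    rw [dd, if_neg (by omega), if_pos (by omega)]
    have e1 : dd (m + 1) (m + 1) = 1 := dd_diag _
    have e2 : dd (m + 1 - 1) m = 1 := by
      rw [show m + 1 - 1 = m by omega]; exact dd_diag m
    rw [e1, e2]; ring
  · -- n ≥ m + 2
    obtain ⟨p, rfl⟩ : ∃ p, n = m + p + 2 := ⟨n - m - 2, by omega⟩
    have key := dd_key m p
    have e0 : dd (m + p + 2) (m + 2) = ((m : ℝ) + 2) * (2 * p + m + 1)! / (2 ^ p * p ! * (m + p + 2)!) := by
      rw [dd, if_neg (by omega), if_neg (by omega)]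
      rw [show 2 * (m + p + 2) - (m + 2) - 1 = 2 * p + m + 1 by omega,
        show m + p + 2 - (m + 2) = p by omega]
      push_cast; try ring_nf
    have e1 : dd (m + p + 2) (m + 1) = ((m : ℝ) + 1) * (2 * p + m + 2)! / (2 ^ (p + 1) * (p + 1)! * (m + p + 2)!) := by
      rw [dd, if_neg (by omega), if_neg (by omega)]
      rw [show 2 * (m + p + 2) - (m + 1) - 1 = 2 * p + m + 2 by omega,
        show m + p + 2 - (m + 1) = p + 1 by omega]
      push_cast; try ring_nf
    have e2 : dd (m + p + 2 - 1) m = (m : ℝ) * (2 * p + m + 1)! / (2 ^ (p + 1) * (p + 1)! * (m + p + 1)!) := by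
      rcases Nat.eq_zero_or_pos m with rfl | hm
      · show dd (0 + p + 2 - 1) 0 = _
        rw [dd, if_pos rfl, if_neg (by omega : ¬(0 + p + 2 - 1 = 0))]
        norm_num
      · rw [dd, if_neg (by omega), if_neg (by omega)]
        rw [show 2 * (m + p + 2 - 1) - m - 1 = 2 * p + m + 1 by omega,
          show m + p + 2 - 1 - m = p + 1 by omega,
          show m + p + 2 - 1 = m + p + 1 by omega]
    rw [e0, e1, e2]
    calc ((m : ℝ) + 2) * (2 * p + m + 1)! / (2 ^ p * p ! * (m + p + 2)!)
        = 2 * ((m : ℝ) + 1) * (2 * p + m + 2)! / (2 ^ (p + 1) * (p + 1)! * (m + p + 2)!) -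
          2 * (m : ℝ) * (2 * p + m + 1)! / (2 ^ (p + 1) * (p + 1)! * (m + p + 1)!) := key
      _ = _ := by ring

lemma usq {t : ℝ} (ht : |t| < 1 / 2) :
    (1 - Real.sqrt (1 - 2 * t)) ^ 2 = 2 * (1 - Real.sqrt (1 - 2 * t)) - 2 * t := by
  have h : 0 ≤ 1 - 2 * t := by cases abs_lt.mp ht; linarith
  have := Real.sq_sqrt h
  nlinarith [this]

lemma dd_hasSum_one {t : ℝ} (ht : |t| < 1 / 2) :
    HasSum (fun n => dd n 1 * t ^ n) (1 - Real.sqrt (1 - 2 * t)) := by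
  have h0 : HasSum (fun m => dd (m + 1) 1 * t ^ (m + 1)) (sC t) := by
    have h := (summable_aC ht).hasSum
    have he : (fun m => dd (m + 1) 1 * t ^ (m + 1)) = aC t := by
      funext m; rw [dd_one, aC]
    rw [he]; exact h
  rw [← sC_sqrt ht]
  have := (hasSum_nat_add_iff (f := fun n => dd n 1 * t ^ n) 1).mp h0
  simpa [dd] using this

lemma dd_hasSum {t : ℝ} (ht : |t| < 1 / 2) :
    ∀ k, HasSum (fun n => dd n k * t ^ n) ((1 - Real.sqrt (1 - 2 * t)) ^ k) := by
  intro k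
  induction k using Nat.twoStepInduction with
  | zero =>
    rw [pow_zero]
    have : (fun n => dd n 0 * t ^ n) = fun n => if n = 0 then (1 : ℝ) else 0 := by
      funext n
      rcases Nat.eq_zero_or_pos n with rfl | h
      · simp [dd]
      · simp [dd, Nat.pos_iff_ne_zero.mp h]
    rw [this]
    exact hasSum_ite_eq 0 1
  | one => rw [pow_one]; exact dd_hasSum_one ht
  | more m ih0 ih1 =>
    have hshift : HasSum (fun n => (if n = 0 then 0 else dd (n - 1) m * t ^ n))
        (t * (1 - Real.sqrt (1 - 2 * t)) ^ m) := by
      have h1 : HasSum (fun n => dd n m * t ^ (n + 1)) (t * (1 - Real.sqrt (1 - 2 * t)) ^ m) := by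
        have h := ih0.mul_left t
        have he : (fun n => dd n m * t ^ (n + 1)) = fun n => t * (dd n m * t ^ n) := by
          funext n; ring
        rw [he]; exact h
      have := (hasSum_nat_add_iff
        (f := fun n => if n = 0 then 0 else dd (n - 1) m * t ^ n) 1).mp (by simpa using h1)
      simpa using this
    have hcomb := (ih1.mul_left 2).sub (hshift.mul_left 2)
    have heq : (fun n => 2 * (dd n (m + 1) * t ^ n) -
        2 * (if n = 0 then 0 else dd (n - 1) m * t ^ n))
        = fun n => dd n (m + 2) * t ^ n := by
      funext n
      rw [dd_rec m n]
      rcases Nat.eq_zero_or_pos n with rfl | h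
      · simp
      · rw [if_neg (by omega), if_neg (by omega)]; ring
    rw [heq] at hcomb
    have hval : 2 * (1 - Real.sqrt (1 - 2 * t)) ^ (m + 1) -
        2 * (t * (1 - Real.sqrt (1 - 2 * t)) ^ m) = (1 - Real.sqrt (1 - 2 * t)) ^ (m + 2) := by
      have := usq ht
      calc 2 * (1 - Real.sqrt (1 - 2 * t)) ^ (m + 1) - 2 * (t * (1 - Real.sqrt (1 - 2 * t)) ^ m)
          = (2 * (1 - Real.sqrt (1 - 2 * t)) - 2 * t) * (1 - Real.sqrt (1 - 2 * t)) ^ m := by ring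
        _ = (1 - Real.sqrt (1 - 2 * t)) ^ 2 * (1 - Real.sqrt (1 - 2 * t)) ^ m := by rw [this]
        _ = _ := by ring
    rw [hval] at hcomb
    exact hcomb

lemma exp_hasSum (y u : ℝ) : HasSum (fun k => y ^ k / k ! * u ^ k) (Real.exp (y * u)) := by
  have h : HasSum (fun k => (y * u) ^ k / k !) (Real.exp (y * u)) := by
    rw [Real.exp_eq_exp_ℝ]
    exact NormedSpace.expSeries_div_hasSum_exp (y * u)
  have he : (fun k => (y * u) ^ k / k !) = fun k => y ^ k / (k ! : ℝ) * u ^ k := by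
    funext k; rw [mul_pow]; ring
  rw [← he]; exact h

theorem reverse_bessel_generating_function (x t : ℝ) (ht : |t| < 1 / 2) :
    HasSum (fun n : ℕ => pB n x * t ^ n / n.factorial)
      (Real.exp (x * (1 - Real.sqrt (1 - 2 * t)))) := by
  set u := 1 - Real.sqrt (1 - 2 * t) with hu
  set F : ℕ × ℕ → ℝ := fun p => x ^ p.1 / (p.1)! * (dd p.2 p.1 * t ^ p.2) with hF
  -- fiberwise sums in k
  have hfiber : ∀ k : ℕ, HasSum (fun n => F (k, n)) (x ^ k / k ! * u ^ k) :=
    fun k => ((dd_hasSum ht k).mul_left _)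
  -- nonneg majorant
  have habs : |(|t|)| < 1 / 2 := by rwa [abs_abs]
  have hG : Summable F := by
    have hGsum : Summable (fun p : ℕ × ℕ => |F p|) := by
      have hFabs : ∀ p : ℕ × ℕ, |F p| =
          |x| ^ p.1 / (p.1)! * (dd p.2 p.1 * |t| ^ p.2) := by
        intro p
        rw [hF]
        rw [abs_mul, abs_div, abs_pow, abs_mul, abs_pow, abs_of_nonneg (dd_nonneg _ _),
          Nat.abs_cast]
      have h1 : ∀ k : ℕ, HasSum (fun n => |F (k, n)|) (|x| ^ k / k ! * (1 - Real.sqrt (1 - 2 * |t|)) ^ k) := by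
        intro k
        have := ((dd_hasSum habs k).mul_left (|x| ^ k / (k ! : ℝ)))
        simp only [hFabs]
        exact this
      rw [summable_prod_of_nonneg (fun p => abs_nonneg _)]
      constructor
      · exact fun k => (h1 k).summable
      · apply Summable.congr (f := fun k => |x| ^ k / k ! * (1 - Real.sqrt (1 - 2 * |t|)) ^ k)
        · exact (exp_hasSum |x| _).summable
        · intro k
          exact ((h1 k).tsum_eq).symm
    exact hGsum.of_abs
  -- total sum equals exp
  have hFsum : HasSum F (Real.exp (x * u)) := by
    have h := hG.hasSum
    have h2 : HasSum (fun k => x ^ k / k ! * u ^ k) (∑' p, F p) :=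
      h.prod_fiberwise hfiber
    rwa [h2.unique (exp_hasSum x u)] at h
  -- swap and sum in k for fixed n
  have hswap : HasSum (fun p : ℕ × ℕ => F (p.2, p.1)) (Real.exp (x * u)) := by
    exact ((Equiv.prodComm ℕ ℕ).hasSum_iff.mpr hFsum).congr_fun (fun p => rfl)
  have hfib2 : ∀ n : ℕ, HasSum (fun k => F (k, n)) (pB n x * t ^ n / n !) := by
    intro n
    have hfin : ∀ k ∉ Finset.range (n + 1), F (k, n) = 0 := by
      intro k hk
      rw [Finset.mem_range, not_lt] at hk
      have : dd n k = 0 := by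
        rw [dd, if_neg (by omega), if_pos (by omega)]
      simp [hF, this]
    have : HasSum (fun k => F (k, n)) _ := hasSum_sum_of_ne_finset_zero hfin
    convert this using 1
    rcases Nat.eq_zero_or_pos n with rfl | hn
    · simp [pB, hF, dd]
    · have hsub : Finset.Icc 1 n ⊆ Finset.range (n + 1) := by
        intro k hk
        rw [Finset.mem_range]
        exact lt_of_le_of_lt (Finset.mem_Icc.mp hk).2 (by omega)
      rw [pB, if_neg (by omega), Finset.sum_mul, Finset.sum_div]
      rw [← Finset.sum_subset hsub (fun k hk hnk => ?_)]
      · apply Finset.sum_congr rfl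
        intro k hk
        obtain ⟨hk1, hk2⟩ := Finset.mem_Icc.mp hk
        show _ = x ^ k / (k ! : ℝ) * (dd n k * t ^ n)
        rw [dd, if_neg (by omega), if_neg (by omega)]
        have hkfact : (k ! : ℝ) = k * (k - 1)! := by
          rw [← Nat.mul_factorial_pred (by omega)]; push_cast; ring
        rw [hkfact]
        have e1 : ((k - 1)! : ℝ) ≠ 0 := Nat.cast_ne_zero.mpr (Nat.factorial_ne_zero _)
        have e2 : ((n - k)! : ℝ) ≠ 0 := Nat.cast_ne_zero.mpr (Nat.factorial_ne_zero _)
        have e3 : ((n)! : ℝ) ≠ 0 := Nat.cast_ne_zero.mpr (Nat.factorial_ne_zero _)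
        have e4 : (2 : ℝ) ^ (n - k) ≠ 0 := by positivity
        have e5 : (k : ℝ) ≠ 0 := Nat.cast_ne_zero.mpr (by omega)
        field_simp
      · have hk0 : k = 0 := by
          rw [Finset.mem_range] at hk
          rw [Finset.mem_Icc] at hnk
          omega
        subst hk0
        show x ^ 0 / ((0)! : ℝ) * (dd n 0 * t ^ n) = 0
        rw [dd, if_pos rfl, if_neg (by omega)]
        simp
  exact hswap.prod_fiberwise hfib2
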